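/- Let k ≥ 1 be an integer and α, β ∈ (0,1), and let Y(v) = 1/( α(β + (1−β)v^k)^{−k} + (1−α) ) for v ≥ 0. If k²α(1−β) > 1, then the equation v = Y(v) has at least three solutions v > 0: there exist v*, v** with 0 < v* < 1 < v** such that Y(v*) = v*, Y(1) = 1, and Y(v**) = v**. -/

import Mathlib

/-- If `k²α(1−β) > 1` then `v = Y(v)` has at least three positive solutions:
some `v* ∈ (0,1)`, the solution `v = 1`, and some `v** ∈ (1,∞)`. -/
theorem stmt15 (k : ℕ) (hk : 1 ≤ k) (α β : ℝ)
    (hα : α ∈ Set.Ioo (0 : ℝ) 1) (hβ : β ∈ Set.Ioo (0 : ℝ) 1)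
    (Y : ℝ → ℝ)
    (hY : ∀ v : ℝ, Y v = 1 / (α * (β + (1 - β) * v ^ k) ^ (-(k : ℤ)) + (1 - α)))
    (hcond : 1 < (k : ℝ) ^ 2 * α * (1 - β)) :
    ∃ vstar vstarstar : ℝ, 0 < vstar ∧ vstar < 1 ∧ 1 < vstarstar ∧
      Y vstar = vstar ∧ Y 1 = 1 ∧ Y vstarstar = vstarstar := by
  obtain ⟨hα0, hα1⟩ := hα
  obtain ⟨hβ0, hβ1⟩ := hβ
  set f : ℝ → ℝ := fun v => β + (1 - β) * v ^ k with hf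
  set D : ℝ → ℝ := fun v => α * f v ^ (-(k : ℤ)) + (1 - α) with hD
  have hfpos : ∀ v : ℝ, 0 ≤ v → 0 < f v := by
    intro v hv
    have : 0 ≤ (1 - β) * v ^ k := mul_nonneg (by linarith) (pow_nonneg hv k)
    simp only [hf]; linarith
  have hDpos : ∀ v : ℝ, 0 ≤ v → 0 < D v := by
    intro v hv
    have h1 : 0 < f v ^ (-(k : ℤ)) := zpow_pos (hfpos v hv) _
    have : 0 < α * f v ^ (-(k : ℤ)) := mul_pos hα0 h1
    simp only [hD]; linarith
  have hDge : ∀ v : ℝ, 0 ≤ v → 1 - α ≤ D v := by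
    intro v hv
    have h1 : 0 < f v ^ (-(k : ℤ)) := zpow_pos (hfpos v hv) _
    have : 0 < α * f v ^ (-(k : ℤ)) := mul_pos hα0 h1
    simp only [hD]; linarith
  have hYD : ∀ v : ℝ, Y v = (D v)⁻¹ := by
    intro v; rw [hY v, one_div]
  have hf1 : f (1 : ℝ) = 1 := by simp [hf]
  have hD1 : D (1 : ℝ) = 1 := by simp [hD, hf1]
  have hY1 : Y 1 = 1 := by rw [hYD, hD1, inv_one]
  -- continuity of D on Ici 0
  have hfc : Continuous f := by
    simp only [hf]; continuity
  have hDc : ContinuousOn D (Set.Ici (0 : ℝ)) := by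
    apply ContinuousOn.add _ continuousOn_const
    apply ContinuousOn.mul continuousOn_const
    exact ContinuousOn.zpow₀ hfc.continuousOn _ (fun a ha => Or.inl (ne_of_gt (hfpos a ha)))
  have hYc : ContinuousOn Y (Set.Ici (0 : ℝ)) := by
    have : ContinuousOn (fun v => (D v)⁻¹) (Set.Ici (0 : ℝ)) :=
      ContinuousOn.inv₀ hDc (fun a ha => ne_of_gt (hDpos a ha))
    exact this.congr (fun a _ => hYD a)
  -- the function g
  set g : ℝ → ℝ := fun v => Y v - v with hg
  have hgc : ContinuousOn g (Set.Ici (0 : ℝ)) := hYc.sub continuousOn_id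
  have hg1 : g 1 = 0 := by simp [hg, hY1]
  -- derivative at 1
  have hfd : HasDerivAt f ((1 - β) * ((k : ℝ) * 1 ^ (k - 1))) 1 :=
    ((hasDerivAt_pow k 1).const_mul (1 - β)).const_add β
  have hout := hasDerivAt_zpow (-(k : ℤ)) (f 1) (Or.inl (by rw [hf1]; norm_num))
  have hzd := hout.comp 1 hfd
  have hDd := (hzd.const_mul α).add_const (1 - α)
  have hinv := hDd.inv (show D 1 ≠ 0 by rw [hD1]; norm_num)
  have hYd : HasDerivAt Y ((k : ℝ) ^ 2 * α * (1 - β)) 1 := by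
    have h2 : HasDerivAt (fun v => (D v)⁻¹) ((k : ℝ) ^ 2 * α * (1 - β)) 1 := by
      refine hinv.congr_deriv ?_
      simp only [Function.comp_def, hf1, one_zpow, one_pow]
      have h1 : α * (1:ℝ) + (1 - α) = 1 := by ring
      rw [h1]
      push_cast
      ring
    exact h2.congr_of_eventuallyEq (Filter.Eventually.of_forall (fun v => hYD v))
  have hgd : HasDerivAt g ((k : ℝ) ^ 2 * α * (1 - β) - 1) 1 := hYd.sub (hasDerivAt_id 1)
  have hslope := hasDerivAt_iff_tendsto_slope.mp hgd
  have hev : ∀ᶠ x in nhdsWithin (1:ℝ) {(1:ℝ)}ᶜ, 0 < slope g 1 x :=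
    hslope.eventually (eventually_gt_nhds (by linarith))
  -- a point a ∈ (0,1) with g a < 0
  have hleft : ∀ᶠ x in nhdsWithin (1:ℝ) (Set.Iio 1), 0 < slope g 1 x :=
    hev.filter_mono (nhdsWithin_mono 1 (fun x hx => ne_of_lt hx))
  have hmemL : Set.Ioo (0:ℝ) 1 ∈ nhdsWithin (1:ℝ) (Set.Iio 1) :=
    Ioo_mem_nhdsLT_of_mem ⟨by norm_num, le_refl 1⟩
  obtain ⟨a, haslope, ha0, ha1⟩ := (hleft.and (Filter.eventually_of_mem hmemL (fun x hx => hx))).exists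
  have hga : g a < 0 := by
    have hs : slope g 1 a = g a / (a - 1) := by
      rw [slope_def_field]; rw [hg1]; ring_nf
    rw [hs] at haslope
    rcases div_pos_iff.mp haslope with ⟨h1, h2⟩ | ⟨h1, h2⟩
    · linarith
    · exact h1
  -- a point b ∈ (1,2) with g b > 0
  have hright : ∀ᶠ x in nhdsWithin (1:ℝ) (Set.Ioi 1), 0 < slope g 1 x :=
    hev.filter_mono (nhdsWithin_mono 1 (fun x hx => ne_of_gt hx))
  have hmemR : Set.Ioo (1:ℝ) 2 ∈ nhdsWithin (1:ℝ) (Set.Ioi 1) :=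
    Ioo_mem_nhdsGT_of_mem ⟨le_refl 1, by norm_num⟩
  obtain ⟨b, hbslope, hb1, hb2⟩ := (hright.and (Filter.eventually_of_mem hmemR (fun x hx => hx))).exists
  have hgb : 0 < g b := by
    have hs : slope g 1 b = g b / (b - 1) := by
      rw [slope_def_field]; rw [hg1]; ring_nf
    rw [hs] at hbslope
    rcases div_pos_iff.mp hbslope with ⟨h1, h2⟩ | ⟨h1, h2⟩
    · exact h1
    · linarith
  -- g 0 > 0
  have hg0 : 0 < g 0 := by
    have : 0 < Y 0 := by rw [hYD]; exact inv_pos.mpr (hDpos 0 le_rfl)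
    simp only [hg]; linarith
  -- first solution by IVT on [0, a]
  have hIcc1 : Set.Icc (0:ℝ) a ⊆ Set.Ici 0 := fun x hx => hx.1
  obtain ⟨vs, hvs, hgvs⟩ :=
    intermediate_value_Ioo' (le_of_lt ha0) (hgc.mono hIcc1) ⟨hga, hg0⟩
  -- bound Y above for large v
  set M : ℝ := max b (1 - α)⁻¹ + 1 with hM
  have hbM : b < M := lt_of_le_of_lt (le_max_left _ _) (by simp only [hM]; linarith)
  have hM0 : (0:ℝ) ≤ M := by
    have : (1:ℝ) < b := hb1
    linarith
  have hgM : g M < 0 := by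
    have hYM : Y M ≤ (1 - α)⁻¹ := by
      rw [hYD]
      exact inv_anti₀ (by linarith) (hDge M hM0)
    have hMbig : (1 - α)⁻¹ < M := lt_of_le_of_lt (le_max_right b (1 - α)⁻¹) (by simp only [hM]; linarith)
    have hYMlt : Y M < M := lt_of_le_of_lt hYM hMbig
    simp only [hg]
    linarith [hYMlt]
  have hIcc2 : Set.Icc b M ⊆ Set.Ici 0 := fun x hx => le_trans (by linarith) hx.1
  obtain ⟨ws, hws, hgws⟩ :=
    intermediate_value_Ioo' (le_of_lt hbM) (hgc.mono hIcc2) ⟨hgM, hgb⟩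
  refine ⟨vs, ws, hvs.1, lt_trans hvs.2 ha1, lt_trans hb1 hws.1, ?_, hY1, ?_⟩
  · have : Y vs - vs = 0 := hgvs
    linarith
  · have : Y ws - ws = 0 := hgws
    linarith
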